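/- Let A, B, T ∈ ℝ^{n×n} be positive semidefinite with T·A·T = B. Then √A·T·√A = √(√A·B·√A); in particular trace(A·T) = trace(√(√A·B·√A)), i.e., every positive semidefinite transport matrix from A to B is an optimal transport matrix. -/

import Mathlib

open Matrix

/-- The positive semidefinite square root of a psd matrix (junk value `0` otherwise). -/
noncomputable def psdSqrt {n : ℕ} (M : Matrix (Fin n) (Fin n) ℝ) : Matrix (Fin n) (Fin n) ℝ :=
  letI := Classical.propDecidable M.PosSemidef
  if h : M.PosSemidef then
    h.1.eigenvectorUnitary.1 * diagonal ((RCLike.ofReal : ℝ → ℝ) ∘ Real.sqrt ∘ h.1.eigenvalues) *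
      (star h.1.eigenvectorUnitary : Matrix (Fin n) (Fin n) ℝ)
  else 0

/-- `trace √(√A·B·√A)`. -/
noncomputable def sqrtTr {n : ℕ} (A B : Matrix (Fin n) (Fin n) ℝ) : ℝ :=
  (psdSqrt (psdSqrt A * B * psdSqrt A)).trace

/-- `T` is an optimal transport matrix from `A` to `B`. -/
def IsOT {n : ℕ} (A B T : Matrix (Fin n) (Fin n) ℝ) : Prop :=
  T * A * Tᵀ = B ∧ (A * T).trace = sqrtTr A B

/-- Squared Bures–Wasserstein distance. -/
noncomputable def W2sq {n : ℕ} (A B : Matrix (Fin n) (Fin n) ℝ) : ℝ :=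
  A.trace + B.trace - 2 * sqrtTr A B

namespace Matrix.PosSemidef
open scoped MatrixOrder

/-- Square root of a psd matrix (via the continuous functional calculus). -/
noncomputable def sqrt {n : ℕ} {M : Matrix (Fin n) (Fin n) ℝ} (_h : M.PosSemidef) :
    Matrix (Fin n) (Fin n) ℝ :=
  CFC.sqrt M

lemma posSemidef_sqrt {n : ℕ} {M : Matrix (Fin n) (Fin n) ℝ} (h : M.PosSemidef) :
    h.sqrt.PosSemidef :=
  (CFC.sqrt_nonneg M).posSemidef

lemma sqrt_mul_self {n : ℕ} {M : Matrix (Fin n) (Fin n) ℝ} (h : M.PosSemidef) :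
    h.sqrt * h.sqrt = M :=
  CFC.sqrt_mul_sqrt_self M h.nonneg

lemma eq_sqrt_of_sq_eq {n : ℕ} {N M : Matrix (Fin n) (Fin n) ℝ} (hN : N.PosSemidef)
    (hM : M.PosSemidef) (h : N ^ 2 = M) : N = hM.sqrt := by
  unfold sqrt
  rw [eq_comm, CFC.sqrt_eq_iff _ _ hM.nonneg hN.nonneg, ← sq, h]

end Matrix.PosSemidef

open scoped MatrixOrder in
lemma psdSqrt_of_posSemidef {n : ℕ} {M : Matrix (Fin n) (Fin n) ℝ} (h : M.PosSemidef) :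
    psdSqrt M = h.sqrt := by
  unfold psdSqrt
  rw [dif_pos h, PosSemidef.sqrt, CFC.sqrt_eq_cfc, cfc_nnreal_eq_real _ M, h.1.cfc_eq]
  simp only [IsHermitian.cfc, Unitary.conjStarAlgAut_apply, Real.coe_sqrt, Real.coe_toNNReal']
  congr 3
  funext i
  simp [max_eq_left (h.eigenvalues_nonneg i)]

/-- If `A, B, T` are psd with `T·A·T = B`, then
`√A·T·√A = √(√A·B·√A)`, and in particular `trace (A·T) = trace √(√A·B·√A)`,
i.e. every psd transport matrix from `A` to `B` is an optimal transport matrix. -/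
theorem stmt2 {n : ℕ} (A B T : Matrix (Fin n) (Fin n) ℝ)
    (hA : A.PosSemidef) (hB : B.PosSemidef) (hT : T.PosSemidef)
    (hTrans : T * A * T = B) :
    psdSqrt A * T * psdSqrt A = psdSqrt (psdSqrt A * B * psdSqrt A) ∧
      (A * T).trace = sqrtTr A B := by
  rw [psdSqrt_of_posSemidef hA]
  set S := hA.sqrt with hS
  have hSh : Sᴴ = S := hA.posSemidef_sqrt.isHermitian
  have hM : (S * T * S).PosSemidef := by
    have := hT.conjTranspose_mul_mul_same S
    rwa [hSh] at this
  have hsq : (S * T * S) ^ 2 = S * B * S := by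
    rw [pow_two]
    calc S * T * S * (S * T * S) = S * (T * (S * S) * T) * S := by noncomm_ring
      _ = S * (T * A * T) * S := by rw [hS, hA.sqrt_mul_self]
      _ = S * B * S := by rw [hTrans]
  have hMB : (S * B * S).PosSemidef := hsq ▸ hM.pow 2
  have key : S * T * S = psdSqrt (S * B * S) := by
    rw [psdSqrt_of_posSemidef hMB]
    exact hM.eq_sqrt_of_sq_eq hMB hsq
  refine ⟨key, ?_⟩
  have : (A * T).trace = (S * T * S).trace := by
    rw [← hA.sqrt_mul_self, ← hS, Matrix.trace_mul_comm, ← mul_assoc,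
      Matrix.trace_mul_cycle]
  rw [this, key, sqrtTr, psdSqrt_of_posSemidef hA]
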